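/- Let p and n be positive integers with 2p+2 ≤ n ≤ 3p. Then the clique cover number of the p-th power of the cycle C_n is at most n−1. -/

import Mathlib

open SimpleGraph

/-- A finite collection of cliques of `G` covering every edge of `G`. -/
def IsEdgeCliqueCover {V : Type*} (G : SimpleGraph V) (𝒞 : Finset (Set V)) : Prop :=
  (∀ C ∈ 𝒞, G.IsClique C) ∧ ∀ ⦃u v : V⦄, G.Adj u v → ∃ C ∈ 𝒞, u ∈ C ∧ v ∈ C

/-- The (edge) clique cover number of `G`: the least size of an edge clique covering. -/
noncomputable def edgeCliqueCoverNumber {V : Type*} (G : SimpleGraph V) : ℕ :=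
  sInf {k | ∃ 𝒞 : Finset (Set V), IsEdgeCliqueCover G 𝒞 ∧ 𝒞.card = k}

/-- The `p`-th power of the cycle `C_n`: vertices are `ZMod n`, and `u` is adjacent to `v`
iff `u - v` or `v - u` (mod `n`) lies in `{1, …, p}`. -/
def cyclePower (n p : ℕ) : SimpleGraph (ZMod n) where
  Adj u v := u ≠ v ∧ ∃ k : ℕ, 1 ≤ k ∧ k ≤ p ∧ (u - v = (k : ZMod n) ∨ v - u = (k : ZMod n))
  symm := by
    constructor
    rintro u v ⟨hne, k, hk1, hk2, hk⟩
    exact ⟨hne.symm, k, hk1, hk2, hk.symm⟩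
  loopless := by
    constructor
    rintro u ⟨hne, -⟩
    exact hne rfl


/-- For positive integers `p, n` with `2p + 2 ≤ n ≤ 3p`, the clique cover number of the `p`-th
power of the cycle `C_n` is at most `n - 1`. -/
theorem stmt_2 (p n : ℕ) (hp : 1 ≤ p) (hn1 : 2 * p + 2 ≤ n) (hn2 : n ≤ 3 * p) :
    edgeCliqueCoverNumber (cyclePower n p) ≤ n - 1 := by
  classical
  haveI : NeZero n := ⟨by omega⟩
  -- nonzero casts
  have hcast_ne : ∀ a : ℕ, 0 < a → a < n → (a : ZMod n) ≠ 0 := by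
    intro a h1 h2 h
    rw [ZMod.natCast_eq_zero_iff] at h
    exact absurd (Nat.le_of_dvd h1 h) (by omega)
  have hpn0 : (p : ZMod n) ≠ 0 := hcast_ne p (by omega) (by omega)
  have h2pn0 : ((2 * p : ℕ) : ZMod n) ≠ 0 := hcast_ne (2 * p) (by omega) (by omega)
  -- the triangle
  set T : Set (ZMod n) := {0, (p : ZMod n), ((2 * p : ℕ) : ZMod n)} with hT
  -- intervals
  set I : ZMod n → Set (ZMod n) := fun j => {v | ∃ i : ℕ, i ≤ p ∧ v = j + (i : ZMod n)} with hI
  set S : Finset (ZMod n) := Finset.univ \ {0, (p : ZMod n)} with hS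
  set 𝒞 : Finset (Set (ZMod n)) := insert T (S.image I) with h𝒞
  -- adjacency helper
  have hadj : ∀ (u : ZMod n) (k : ℕ), 1 ≤ k → k ≤ p → (cyclePower n p).Adj u (u + k) := by
    intro u k h1 h2
    refine ⟨fun h => ?_, k, h1, h2, Or.inr (by ring)⟩
    have : (k : ZMod n) = 0 := by
      have := sub_eq_zero_of_eq h
      simpa using this.symm
    exact hcast_ne k h1 (by omega) this
  -- T facts
  have hne0p : (0 : ZMod n) ≠ (p : ZMod n) := fun h => hpn0 h.symm
  have hne02p : (0 : ZMod n) ≠ ((2 * p : ℕ) : ZMod n) := fun h => h2pn0 h.symm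
  have hnep2p : (p : ZMod n) ≠ ((2 * p : ℕ) : ZMod n) := by
    intro h
    apply hpn0
    have : ((2 * p : ℕ) : ZMod n) - (p : ZMod n) = (p : ZMod n) := by push_cast; ring
    rw [← this, ← h, sub_self]
  have hadj0p : (cyclePower n p).Adj 0 (p : ZMod n) := by
    have := hadj 0 p hp le_rfl; simpa using this
  have hadjp2p : (cyclePower n p).Adj (p : ZMod n) ((2 * p : ℕ) : ZMod n) := by
    have := hadj (p : ZMod n) p hp le_rfl
    have h2 : (p : ZMod n) + (p : ℕ) = ((2 * p : ℕ) : ZMod n) := by push_cast; ring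
    rwa [h2] at this
  have hadj02p : (cyclePower n p).Adj 0 ((2 * p : ℕ) : ZMod n) := by
    refine ⟨hne02p, n - 2 * p, by omega, by omega, Or.inl ?_⟩
    have : ((n - 2 * p : ℕ) : ZMod n) = (n : ZMod n) - ((2 * p : ℕ) : ZMod n) := by
      rw [Nat.cast_sub (by omega)]
    rw [this, ZMod.natCast_self]
  -- T is a clique
  have hTclique : (cyclePower n p).IsClique T := by
    rw [hT]
    intro a ha b hb hab
    simp only [Set.mem_insert_iff, Set.mem_singleton_iff] at ha hb
    rcases ha with rfl | rfl | rfl <;> rcases hb with rfl | rfl | rfl <;>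
      first
        | exact absurd rfl hab
        | exact hadj0p | exact hadj0p.symm
        | exact hadjp2p | exact hadjp2p.symm
        | exact hadj02p | exact hadj02p.symm
  -- intervals are cliques
  have hIclique : ∀ j : ZMod n, (cyclePower n p).IsClique (I j) := by
    intro j a ha b hb hab
    obtain ⟨i, hi, rfl⟩ := ha
    obtain ⟨i', hi', rfl⟩ := hb
    rcases lt_trichotomy i i' with h | h | h
    · have hb' : j + (i' : ZMod n) = (j + (i : ZMod n)) + ((i' - i : ℕ) : ZMod n) := by
        rw [Nat.cast_sub h.le]; ring
      rw [hb']
      exact hadj _ (i' - i) (by omega) (by omega)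
    · exact absurd (by rw [h]) hab
    · have hb' : j + (i : ZMod n) = (j + (i' : ZMod n)) + ((i - i' : ℕ) : ZMod n) := by
        rw [Nat.cast_sub h.le]; ring
      rw [hb']
      exact (hadj _ (i - i') (by omega) (by omega)).symm
  -- membership of intervals in the cover
  have hImem : ∀ j : ZMod n, j ≠ 0 → j ≠ (p : ZMod n) → I j ∈ 𝒞 := by
    intro j h1 h2
    apply Finset.mem_insert_of_mem
    exact Finset.mem_image_of_mem I (by simp [hS, h1, h2])
  -- coverage helper: every edge u → u + k is covered
  have hcov : ∀ (u : ZMod n) (k : ℕ), 1 ≤ k → k ≤ p →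
      ∃ C ∈ 𝒞, u ∈ C ∧ u + (k : ZMod n) ∈ C := by
    intro u k h1 h2
    have humem : ∀ j : ZMod n, j ≠ 0 → j ≠ (p : ZMod n) → (∃ i : ℕ, i ≤ p ∧ u = j + i) →
        (∃ i : ℕ, i + k ≤ p ∧ u = j + i) → True := fun _ _ _ _ _ => trivial
    rcases eq_or_lt_of_le h2 with heq | hk
    · -- k = p : the tight case
      subst heq
      have hTmem : T ∈ 𝒞 := Finset.mem_insert_self _ _
      by_cases hu0 : u = 0
      · refine ⟨T, hTmem, ?_, ?_⟩
        · rw [hu0]; exact Set.mem_insert _ _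
        · rw [hu0, zero_add]; exact Set.mem_insert_of_mem _ (Set.mem_insert _ _)
      · by_cases hup : u = (k : ZMod n)
        · refine ⟨T, hTmem, ?_, ?_⟩
          · rw [hup]; exact Set.mem_insert_of_mem _ (Set.mem_insert _ _)
          · rw [hup]
            have h2p : (k : ZMod n) + (k : ZMod n) = ((2 * k : ℕ) : ZMod n) := by push_cast; ring
            rw [h2p]
            exact Set.mem_insert_of_mem _ (Set.mem_insert_of_mem _ rfl)
        · exact ⟨I u, hImem u hu0 hup, ⟨0, by omega, by simp⟩, ⟨k, le_rfl, rfl⟩⟩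
    · -- k < p : one of the starts u, u - 1 works
      by_cases hgood : u ≠ 0 ∧ u ≠ (p : ZMod n)
      · exact ⟨I u, hImem u hgood.1 hgood.2, ⟨0, by omega, by simp⟩, ⟨k, h2, rfl⟩⟩
      · -- use start u - 1
        have hu1 : u = (u - 1) + ((1 : ℕ) : ZMod n) := by push_cast; ring
        have huk : u + (k : ZMod n) = (u - 1) + ((k + 1 : ℕ) : ZMod n) := by push_cast; ring
        have hj0 : u - 1 ≠ 0 := by
          intro h
          have hu : u = 1 := by
            have := sub_eq_zero.mp h; simpa using this
          rcases not_and_or.mp hgood with h' | h'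
          · rw [not_not] at h'
            rw [h'] at hu
            refine hcast_ne 1 one_pos (by omega) ?_
            rw [Nat.cast_one]; exact hu.symm
          · rw [not_not] at h'
            rw [h'] at hu
            have : ((p - 1 : ℕ) : ZMod n) = 0 := by
              rw [Nat.cast_sub hp, hu]; simp
            exact hcast_ne (p - 1) (by omega) (by omega) this
        have hjp : u - 1 ≠ (p : ZMod n) := by
          intro h
          have hu : u = ((p + 1 : ℕ) : ZMod n) := by
            have : u = (p : ZMod n) + 1 := by
              rw [← h]; ring
            rw [this]; push_cast; ring
          rcases not_and_or.mp hgood with h' | h'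
          · rw [not_not] at h'
            rw [h'] at hu
            exact hcast_ne (p + 1) (by omega) (by omega) hu.symm
          · rw [not_not] at h'
            rw [h'] at hu
            have : ((1 : ℕ) : ZMod n) = 0 := by
              have h1 : ((p + 1 : ℕ) : ZMod n) - (p : ZMod n) = ((1 : ℕ) : ZMod n) := by
                push_cast; ring
              rw [← h1, ← hu, sub_self]
            exact hcast_ne 1 one_pos (by omega) this
        exact ⟨I (u - 1), hImem _ hj0 hjp, ⟨1, by omega, hu1⟩, ⟨k + 1, by omega, huk⟩⟩
  -- the cover is an edge clique cover
  have hcover : IsEdgeCliqueCover (cyclePower n p) 𝒞 := by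
    constructor
    · intro C hC
      rcases Finset.mem_insert.mp hC with rfl | hC
      · exact hTclique
      · obtain ⟨j, -, rfl⟩ := Finset.mem_image.mp hC
        exact hIclique j
    · rintro u v ⟨hne, k, hk1, hk2, hcase | hcase⟩
      · have hv : u = v + (k : ZMod n) := by rw [← hcase]; ring
        obtain ⟨C, hC, h1, h2⟩ := hcov v k hk1 hk2
        exact ⟨C, hC, by rw [hv]; exact h2, h1⟩
      · have hv : v = u + (k : ZMod n) := by rw [← hcase]; ring
        obtain ⟨C, hC, h1, h2⟩ := hcov u k hk1 hk2
        exact ⟨C, hC, h1, by rw [hv]; exact h2⟩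
  -- cardinality bound
  have hcard : 𝒞.card ≤ n - 1 := by
    calc 𝒞.card ≤ (S.image I).card + 1 := Finset.card_insert_le _ _
    _ ≤ S.card + 1 := by
        have := Finset.card_image_le (f := I) (s := S)
        omega
    _ ≤ n - 1 := by
        have hSc : S.card = n - 2 := by
          rw [hS, Finset.card_sdiff_of_subset (Finset.subset_univ _), Finset.card_univ, ZMod.card]
          have : ({0, (p : ZMod n)} : Finset (ZMod n)).card = 2 := by
            rw [Finset.card_insert_of_notMem (by simpa using hne0p), Finset.card_singleton]
          omega
        omega
  calc edgeCliqueCoverNumber (cyclePower n p) ≤ 𝒞.card :=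
        Nat.sInf_le ⟨𝒞, hcover, rfl⟩
  _ ≤ n - 1 := hcard
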